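/- Let C be a cyclic 2ℓ-polytope with 2ℓ+2 vertices, and let c_1,…,c_{2k−1} be distinct vertices of C with 1 ≤ k ≤ ℓ+1. Then there exist a subset {c_{i_1},…,c_{i_k}} ⊆ {c_1,…,c_{2k−1}} of size k and a missing face M ∈ ℳ(C) such that {c_{i_1},…,c_{i_k}} ⊆ M. -/

import Mathlib

open Set

noncomputable section

/-- `Euc N` is the Euclidean space `ℝ^N`. -/
abbrev Euc (N : ℕ) : Type := EuclideanSpace ℝ (Fin N)

/-- A polytope is the convex hull of a finite point set. -/
def IsPolytope {N : ℕ} (P : Set (Euc N)) : Prop :=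
  ∃ V : Set (Euc N), V.Finite ∧ P = convexHull ℝ V

-- The dimension of a set: the dimension of its affine hull (with `pdim ∅ = -1`).
open Classical in
def pdim {N : ℕ} (A : Set (Euc N)) : ℤ :=
  if A = ∅ then -1 else (Module.finrank ℝ (affineSpan ℝ A).direction : ℤ)

/-- The vertex set of a polytope: its extreme points. -/
def verts {N : ℕ} (P : Set (Euc N)) : Set (Euc N) :=
  P.extremePoints ℝ

/-- A proper face of `P`: the intersection of `P` with a supporting hyperplane. -/
def IsProperFace {N : ℕ} (P F : Set (Euc N)) : Prop :=
  ∃ (l : Euc N →ₗ[ℝ] ℝ) (c : ℝ), l ≠ 0 ∧ (∀ x ∈ P, l x ≤ c) ∧ (∃ x ∈ P, l x = c) ∧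
    F = {x | x ∈ P ∧ l x = c}

/-- A face of `P`, where the improper faces `∅` and `P` itself are also counted as faces. -/
def IsFaceOf {N : ℕ} (P F : Set (Euc N)) : Prop :=
  F = ∅ ∨ F = P ∨ IsProperFace P F

/-- Membership in the boundary complex `𝓑(P)` (all proper faces together with `∅`). -/
def MemBoundary {N : ℕ} (P F : Set (Euc N)) : Prop :=
  F = ∅ ∨ IsProperFace P F

/-- `F` is a `k`-dimensional (proper) face of `P`. -/
def IsFaceOfDim {N : ℕ} (P F : Set (Euc N)) (k : ℤ) : Prop :=
  IsProperFace P F ∧ pdim F = k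

/-- A facet of a `d`-polytope `P` is a `(d-1)`-face. -/
def IsFacet {N : ℕ} (d : ℕ) (P F : Set (Euc N)) : Prop :=
  IsFaceOfDim P F ((d : ℤ) - 1)

/-- `P` is `k`-neighbourly: every `k` of its vertices form the vertex set of a proper face. -/
def IsKNeighbourly {N : ℕ} (P : Set (Euc N)) (k : ℕ) : Prop :=
  ∀ S ⊆ verts P, S.ncard = k → ∃ F, IsProperFace P F ∧ verts F = S

/-- `P` is a neighbourly `d`-polytope: a `d`-dimensional `⌊d/2⌋`-neighbourly polytope. -/
def IsNeighbourly {N : ℕ} (d : ℕ) (P : Set (Euc N)) : Prop :=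
  IsPolytope P ∧ pdim P = (d : ℤ) ∧ IsKNeighbourly P (d / 2)

/-- `U` is a universal `k`-face of the `d`-polytope `P`:
`conv (S ∪ U)` is a face of `P` for every `S ⊆ 𝒱(P)` with `|S| ≤ ⌊(d-k-1)/2⌋`. -/
def IsUniversalFace {N : ℕ} (d : ℕ) (P U : Set (Euc N)) (k : ℕ) : Prop :=
  IsFaceOfDim P U (k : ℤ) ∧
  ∀ S ⊆ verts P, S.ncard ≤ (d - k - 1) / 2 →
    IsProperFace P (convexHull ℝ (S ∪ U))

/-- `z` is beyond the facet `F` of `P`: the supporting hyperplane of `F` separates `z` from `P`. -/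
def Beyond {N : ℕ} (P F : Set (Euc N)) (z : Euc N) : Prop :=
  ∃ (l : Euc N →ₗ[ℝ] ℝ) (c : ℝ), l ≠ 0 ∧ (∀ x ∈ P, l x ≤ c) ∧
    F = {x | x ∈ P ∧ l x = c} ∧ c < l z

/-- `z` is beneath the facet `F` of `P`: `z` lies on the same open side of `aff F` as `P`. -/
def Beneath {N : ℕ} (P F : Set (Euc N)) (z : Euc N) : Prop :=
  ∃ (l : Euc N →ₗ[ℝ] ℝ) (c : ℝ), l ≠ 0 ∧ (∀ x ∈ P, l x ≤ c) ∧
    F = {x | x ∈ P ∧ l x = c} ∧ l z < c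

/-- `Phi x y j = Φ_j = conv {x_1, y_1, …, x_j, y_j}` (1-indexed; `Phi x y 0 = ∅`). -/
def Phi {N m : ℕ} (x y : Fin m → Euc N) (j : ℕ) : Set (Euc N) :=
  convexHull ℝ {p | ∃ i : Fin m, (i : ℕ) < j ∧ (p = x i ∨ p = y i)}

/-- `𝒯 = {Φ_1, …, Φ_m}` is a universal tower in `P`: the `x_i, y_i` are distinct vertices of `P`
and `Φ_j` is a universal `(2j-1)`-face of `P` for `1 ≤ j ≤ m`. -/
def IsUniversalTower {N : ℕ} (m : ℕ) (P : Set (Euc N)) (x y : Fin m → Euc N) : Prop :=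
  Function.Injective (Sum.elim x y) ∧
  (∀ i, x i ∈ verts P) ∧ (∀ i, y i ∈ verts P) ∧
  ∀ j, 1 ≤ j → j ≤ m → IsUniversalFace (2 * m) P (Phi x y j) (2 * j - 1)

/-- `F ∈ 𝒞(𝒯) = (𝓕_1∖𝓕_2) ∪ (𝓕_3∖𝓕_4) ∪ ⋯` where `𝓕_i` is the set of facets containing `Φ_i`
(with `𝓕_j = ∅` for `j > m`). -/
def InSewC {N : ℕ} (m : ℕ) (x y : Fin m → Euc N) (F : Set (Euc N)) : Prop :=
  ∃ i, Odd i ∧ 1 ≤ i ∧ i ≤ m ∧ Phi x y i ⊆ F ∧ (i = m ∨ ¬ Phi x y (i + 1) ⊆ F)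

/-- `z` lies exactly beyond `𝒞(𝒯)`: `z` is beyond every facet of `P` in `𝒞(𝒯)` and beneath
every facet of `P` not in `𝒞(𝒯)`. -/
def ExactlyBeyond {N : ℕ} (m : ℕ) (P : Set (Euc N)) (x y : Fin m → Euc N) (z : Euc N) : Prop :=
  ∀ F, IsFacet (2 * m) P F →
    (InSewC m x y F → Beyond P F z) ∧ (¬ InSewC m x y F → Beneath P F z)

/-- `Q` is a quotient polytope `P/G` of `P` by its face `G`, with vertex correspondence `φ`:
the face lattice of `Q` is isomorphic to the interval `{F : G ⊆ F ⊆ P}` of the face lattice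
of `P`, via vertex sets. -/
def IsQuotient {N M : ℕ} (P G : Set (Euc N)) (Q : Set (Euc M)) (φ : Euc N → Euc M) : Prop :=
  IsPolytope Q ∧ Set.BijOn φ (verts P \ verts G) (verts Q) ∧
  ∀ W ⊆ verts P \ verts G,
    ((∃ F, IsFaceOf P F ∧ G ⊆ F ∧ verts F = W ∪ verts G) ↔
     (∃ F', IsFaceOf Q F' ∧ verts F' = φ '' W))

/-- `P` and `Q` are combinatorially equivalent via the vertex bijection `ψ`:
`ψ` maps vertex sets of faces onto vertex sets of faces in both directions. -/
def CombEquiv {N M : ℕ} (P : Set (Euc N)) (Q : Set (Euc M)) (ψ : Euc N → Euc M) : Prop :=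
  Set.BijOn ψ (verts P) (verts Q) ∧
  ∀ W ⊆ verts P,
    ((∃ F, IsFaceOf P F ∧ verts F = W) ↔ (∃ F', IsFaceOf Q F' ∧ verts F' = ψ '' W))

/-- `A` is a missing face of `P` relative to the face `G`;
`IsMissingFaceRel P G` describes `ℳ(P/G)`. -/
def IsMissingFaceRel {N : ℕ} (P G A : Set (Euc N)) : Prop :=
  A ⊆ verts P \ verts G ∧
  ¬ MemBoundary P (convexHull ℝ (A ∪ G)) ∧
  ∀ A' ⊂ A, MemBoundary P (convexHull ℝ (A' ∪ G))

/-- `A ∈ ℳ(P)`, the set of missing faces of `P`. -/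
def IsMissingFace {N : ℕ} (P A : Set (Euc N)) : Prop :=
  IsMissingFaceRel P ∅ A

/-- The moment curve `t ↦ (t, t², …, t^d)` in `ℝ^d`. -/
def momentCurve (d : ℕ) (t : ℝ) : Euc d :=
  WithLp.toLp 2 fun i => t ^ ((i : ℕ) + 1)

/-- `C` is a cyclic `d`-polytope with `n` vertices: the convex hull of `n` distinct points
on the moment curve in `ℝ^d`. -/
def IsCyclicPolytope (d n : ℕ) (C : Set (Euc d)) : Prop :=
  ∃ t : Fin n → ℝ, Function.Injective t ∧
    C = convexHull ℝ (Set.range fun i => momentCurve d (t i)) ∧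
    (verts C).ncard = n


open Polynomial in
theorem faceEq {N : ℕ} (V : Finset (Euc N)) (L : Euc N →ₗ[ℝ] ℝ) (c : ℝ)
    (h : ∀ y ∈ V, L y ≤ c) :
    {x ∈ convexHull ℝ (V : Set (Euc N)) | L x = c}
      = convexHull ℝ ((V.filter (fun y => L y = c)) : Set (Euc N)) := by
  classical
  ext x
  constructor
  · rintro ⟨hx, hLx⟩
    rw [Finset.convexHull_eq] at hx
    obtain ⟨w, hw0, hw1, hwx⟩ := hx
    have hL : L x = ∑ y ∈ V, w y * L y := by
      rw [← hwx]
      simp [Finset.centerMass, hw1, map_sum, map_smul, smul_eq_mul]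
    have hsum : ∑ y ∈ V, w y * (c - L y) = 0 := by
      have h2 : ∑ y ∈ V, w y * (c - L y) = (∑ y ∈ V, w y) * c - ∑ y ∈ V, w y * L y := by
        rw [Finset.sum_mul, ← Finset.sum_sub_distrib]
        congr 1; ext y; ring
      rw [h2, hw1, ← hL, hLx]; ring
    have hzero : ∀ y ∈ V, w y * (c - L y) = 0 :=
      (Finset.sum_eq_zero_iff_of_nonneg
        (fun y hy => mul_nonneg (hw0 y hy) (by linarith [h y hy]))).mp hsum
    have hwz : ∀ y ∈ V, y ∉ V.filter (fun y => L y = c) → w y = 0 := by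
      intro y hy hyf
      rcases mul_eq_zero.mp (hzero y hy) with h0 | h0
      · exact h0
      · exact absurd (Finset.mem_filter.mpr ⟨hy, by linarith⟩) hyf
    rw [Finset.convexHull_eq]
    refine ⟨w, fun y hy => hw0 y (Finset.mem_filter.mp hy).1, ?_, ?_⟩
    · rw [← hw1]
      exact (Finset.sum_subset (Finset.filter_subset _ _) hwz).symm ▸ rfl
    · rw [← hwx]
      rw [Finset.centerMass, Finset.centerMass,
        Finset.sum_subset (Finset.filter_subset _ _) hwz,
        Finset.sum_subset (Finset.filter_subset _ _) (fun y hy hyf => by rw [hwz y hy hyf, zero_smul])]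
  · intro hx
    have hsub : (↑(V.filter fun y => L y = c) : Set (Euc N)) ⊆ ↑V := by
      exact_mod_cast Finset.filter_subset _ _
    refine ⟨convexHull_mono hsub hx, ?_⟩
    have : convexHull ℝ ((V.filter (fun y => L y = c)) : Set (Euc N)) ⊆ {x | L x = c} := by
      apply convexHull_min
      · intro y hy
        exact (Finset.mem_filter.mp (by exact_mod_cast hy)).2
      · exact convex_hyperplane (LinearMap.isLinear L) c
    exact this hx

def coeffL {N : ℕ} (a : Fin N → ℝ) : Euc N →ₗ[ℝ] ℝ where
  toFun x := ∑ i, a i * x i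
  map_add' x y := by simp only [PiLp.add_apply, mul_add, Finset.sum_add_distrib]
  map_smul' r x := by
    simp only [PiLp.smul_apply, smul_eq_mul, RingHom.id_apply, Finset.mul_sum]
    congr 1; ext i; ring

lemma coeffL_apply {N : ℕ} (a : Fin N → ℝ) (x : Euc N) : coeffL a x = ∑ i, a i * x i := rfl

lemma coeffL_moment {N : ℕ} (a : Fin N → ℝ) (t : ℝ) :
    coeffL a (momentCurve N t) = ∑ i, a i * t ^ ((i:ℕ)+1) := by
  simp [coeffL, momentCurve]

open Polynomial in
lemma coeffL_poly {N : ℕ} (p : ℝ[X]) (hdeg : p.natDegree ≤ N) (s : ℝ) :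
    coeffL (fun i : Fin N => -(p.coeff ((i:ℕ)+1))) (momentCurve N s) = p.coeff 0 - p.eval s := by
  rw [coeffL_moment]
  rw [Polynomial.eval_eq_sum_range' (show p.natDegree < N+1 by omega) s]
  rw [Finset.sum_range_succ']
  rw [Fin.sum_univ_eq_sum_range (fun i => -(p.coeff (i+1)) * s^(i+1))]
  simp only [neg_mul, Finset.sum_neg_distrib, pow_zero, mul_one]
  ring

lemma coeffL_single {N : ℕ} (a : Fin N → ℝ) (i : Fin N) :
    coeffL a (EuclideanSpace.single i (1:ℝ)) = a i := by
  simp [coeffL, EuclideanSpace.single_apply]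

lemma euc_decomp {N : ℕ} (x : Euc N) : x = ∑ i, x i • EuclideanSpace.single i (1:ℝ) := by
  ext j
  rw [WithLp.ofLp_sum, Fintype.sum_apply]
  simp [EuclideanSpace.single_apply]

lemma lin_eq_coeffL {N : ℕ} (L : Euc N →ₗ[ℝ] ℝ) :
    L = coeffL (fun i => L (EuclideanSpace.single i 1)) := by
  ext x
  conv_lhs => rw [euc_decomp x]
  simp [coeffL, map_sum, map_smul, smul_eq_mul, mul_comm]

lemma coeffL_ne_zero {N : ℕ} (a : Fin N → ℝ) (i : Fin N) (h : a i ≠ 0) :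
    coeffL a ≠ 0 := by
  intro h0
  apply h
  rw [← coeffL_single a i, h0]
  simp

open Polynomial in
lemma two_roots (q : ℝ[X]) (hq : q ≠ 0) {a b z : ℝ} (ha : 0 < q.eval a)
    (hb : 0 < q.eval b) (haz : a < z) (hzb : z < b) (hz : q.eval z = 0) :
    2 ≤ Multiset.card (q.roots.filter (fun x => a < x ∧ x < b)) := by
  classical
  set m := rootMultiplicity z q with hm
  have hm1 : 1 ≤ m := (rootMultiplicity_pos hq).mpr hz
  set g := q /ₘ (X - C z) ^ m with hgdef
  have hfac : (X - C z) ^ m * g = q := pow_mul_divByMonic_rootMultiplicity_eq q z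
  have hgz : g.eval z ≠ 0 := eval_divByMonic_pow_rootMultiplicity_ne_zero z hq
  rcases Nat.lt_or_ge m 2 with hm2 | hm2
  · have hmeq : m = 1 := by omega
    rw [hmeq, pow_one] at hfac
    have hqa : q.eval a = (a - z) * g.eval a := by rw [← hfac]; simp
    have hqb : q.eval b = (b - z) * g.eval b := by rw [← hfac]; simp
    have hga : g.eval a < 0 := by nlinarith
    have hgb : 0 < g.eval b := by nlinarith
    have hivt : (0:ℝ) ∈ Set.Ioo (g.eval a) (g.eval b) := ⟨hga, hgb⟩
    obtain ⟨w, hw, hgw⟩ := intermediate_value_Ioo (le_of_lt (haz.trans hzb))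
      (g.continuous.continuousOn (s := Set.Icc a b)) hivt
    have hqw : q.eval w = 0 := by rw [← hfac]; simp [hgw]
    have hwz : w ≠ z := fun h => hgz (h ▸ hgw)
    have hzmem : z ∈ q.roots.filter (fun x => a < x ∧ x < b) :=
      Multiset.mem_filter.mpr ⟨(mem_roots hq).mpr hz, haz, hzb⟩
    have hwmem : w ∈ q.roots.filter (fun x => a < x ∧ x < b) :=
      Multiset.mem_filter.mpr ⟨(mem_roots hq).mpr hqw, hw.1, hw.2⟩
    calc 2 = ({z, w} : Finset ℝ).card := by
          rw [Finset.card_insert_of_notMem (by simpa using hwz.symm), Finset.card_singleton]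
    _ ≤ (q.roots.filter (fun x => a < x ∧ x < b)).toFinset.card := by
        apply Finset.card_le_card
        intro x hx
        rcases Finset.mem_insert.mp hx with h | h
        · exact Multiset.mem_toFinset.mpr (h ▸ hzmem)
        · exact Multiset.mem_toFinset.mpr ((Finset.mem_singleton.mp h) ▸ hwmem)
    _ ≤ _ := Multiset.toFinset_card_le _
  · calc 2 ≤ m := hm2
    _ = Multiset.count z (q.roots.filter (fun x => a < x ∧ x < b)) := by
        rw [Multiset.count_filter_of_pos ⟨haz, hzb⟩, count_roots]
    _ ≤ _ := Multiset.count_le_card _ _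

open Polynomial in
lemma no_alt_poly {m : ℕ} (q : ℝ[X]) (hq : q ≠ 0) (hdeg : q.natDegree ≤ 2*m)
    (g : Fin (2*m+2) → ℝ) (hg : StrictMono g)
    (hpos : ∀ i : Fin (2*m+2), Even (i:ℕ) → 0 < q.eval (g i))
    (hroot : ∀ i : Fin (2*m+2), Odd (i:ℕ) → q.eval (g i) = 0) : False := by
  classical
  have key : ∀ j : ℕ, (hj : j ≤ m) →
      2*j ≤ Multiset.card (q.roots.filter (fun x => x < g ⟨2*j, by omega⟩)) := by
    intro j
    induction j with
    | zero => intro _; simp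
    | succ j ih =>
      intro hj
      have hj' : j ≤ m := by omega
      set A := g ⟨2*j, by omega⟩ with hA
      set B := g ⟨2*(j+1), by omega⟩ with hB
      set Z := g ⟨2*j+1, by omega⟩ with hZ
      have hAZ : A < Z := hg (by simp [Fin.lt_def])
      have hZB : Z < B := hg (by simp [Fin.lt_def]; omega)
      have hposA : 0 < q.eval A := hpos ⟨2*j, by omega⟩ (by simp only [Fin.val_mk]; exact ⟨j, by ring⟩)
      have hposB : 0 < q.eval B := hpos ⟨2*(j+1), by omega⟩ (by simp only [Fin.val_mk]; exact ⟨j+1, by ring⟩)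
      have hrootZ : q.eval Z = 0 := hroot ⟨2*j+1, by omega⟩ (by simp only [Fin.val_mk]; exact ⟨j, by ring⟩)
      have h2 := two_roots q hq hposA hposB hAZ hZB hrootZ
      have hsplit : (q.roots.filter (fun x => x < B)) =
          ((q.roots.filter (fun x => x < B)).filter (fun x => x < A)) +
          ((q.roots.filter (fun x => x < B)).filter (fun x => ¬ x < A)) :=
        (Multiset.filter_add_not _ _).symm
      have e1 : ((q.roots.filter (fun x => x < B)).filter (fun x => x < A)) =
          q.roots.filter (fun x => x < A) := by
        rw [Multiset.filter_filter]
        apply Multiset.filter_congr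
        intro x _
        constructor
        · rintro ⟨h, _⟩; exact h
        · intro h; exact ⟨h, h.trans (hAZ.trans hZB)⟩
      have e2 : (q.roots.filter (fun x => A < x ∧ x < B)) ≤
          ((q.roots.filter (fun x => x < B)).filter (fun x => ¬ x < A)) := by
        rw [Multiset.filter_filter]
        apply Multiset.monotone_filter_right
        rintro x ⟨h1, h2⟩
        exact ⟨not_lt.mpr h1.le, h2⟩
      have := ih hj'
      calc 2*(j+1) = 2*j + 2 := by ring
      _ ≤ Multiset.card (q.roots.filter (fun x => x < A)) +
          Multiset.card (q.roots.filter (fun x => A < x ∧ x < B)) := by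
          exact Nat.add_le_add this h2
      _ ≤ _ := by
          rw [hsplit, Multiset.card_add, e1]
          exact Nat.add_le_add_left (Multiset.card_le_card e2) _
  have hlast := key m le_rfl
  set A := g ⟨2*m, by omega⟩ with hA
  set Z := g ⟨2*m+1, by omega⟩ with hZ
  have hAZ : A < Z := hg (by simp [Fin.lt_def])
  have hZmem : Z ∈ q.roots.filter (fun x => ¬ x < A) :=
    Multiset.mem_filter.mpr ⟨(mem_roots hq).mpr
      (hroot ⟨2*m+1, by omega⟩ (by simp only [Fin.val_mk]; exact ⟨m, by ring⟩)), not_lt.mpr hAZ.le⟩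
  have h1 : 1 ≤ Multiset.card (q.roots.filter (fun x => ¬ x < A)) :=
    Multiset.card_pos_iff_exists_mem.mpr ⟨Z, hZmem⟩
  have htot : 2*m + 1 ≤ Multiset.card q.roots := by
    calc 2*m + 1 ≤ Multiset.card (q.roots.filter (fun x => x < A)) +
        Multiset.card (q.roots.filter (fun x => ¬ x < A)) := Nat.add_le_add hlast h1
    _ = Multiset.card q.roots := by rw [← Multiset.card_add, Multiset.filter_add_not]
  have := q.card_roots'
  omega

open Polynomial in
lemma no_alt_poly_even {m : ℕ} (q : ℝ[X]) (hq : q ≠ 0) (hdeg : q.natDegree ≤ 2*m)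
    (g : Fin (2*m+2) → ℝ) (hg : StrictMono g)
    (hpos : ∀ i : Fin (2*m+2), Odd (i:ℕ) → 0 < q.eval (g i))
    (hroot : ∀ i : Fin (2*m+2), Even (i:ℕ) → q.eval (g i) = 0) : False := by
  set q' := q.comp (-X) with hq'def
  have hev : ∀ x : ℝ, q'.eval x = q.eval (-x) := by intro x; simp [hq'def, eval_comp]
  have hcc : q'.comp (-X) = q := by
    rw [hq'def, Polynomial.comp_assoc]
    simp
  have hq' : q' ≠ 0 := by
    intro h
    apply hq
    rw [← hcc, h, zero_comp]
  have hdeg' : q'.natDegree ≤ 2*m := by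
    rw [hq'def, natDegree_comp]
    simpa using hdeg
  have hrevodd : ∀ i : Fin (2*m+2), Even (i:ℕ) → Odd ((i.rev : Fin (2*m+2)) : ℕ) := by
    intro i hi
    rw [Fin.val_rev]
    rw [Nat.even_iff] at hi
    rw [Nat.odd_iff]
    have := i.isLt
    omega
  have hreveven : ∀ i : Fin (2*m+2), Odd (i:ℕ) → Even ((i.rev : Fin (2*m+2)) : ℕ) := by
    intro i hi
    rw [Fin.val_rev]
    rw [Nat.odd_iff] at hi
    rw [Nat.even_iff]
    have := i.isLt
    omega
  refine no_alt_poly q' hq' hdeg' (fun i => - g i.rev) ?_ ?_ ?_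
  · intro i j hij
    simp only [neg_lt_neg_iff]
    exact hg (Fin.rev_lt_rev.mpr hij)
  · intro i hi
    rw [hev, neg_neg]
    exact hpos i.rev (hrevodd i hi)
  · intro i hi
    rw [hev, neg_neg]
    exact hroot i.rev (hreveven i hi)

open Polynomial in
lemma face_of_small {l : ℕ} (hl : 1 ≤ l) (u : Fin (2*l+2) → ℝ) (hu : Function.Injective u)
    (S : Finset (Fin (2*l+2))) (hSne : S.Nonempty) (hcard : S.card ≤ l) :
    IsProperFace (convexHull ℝ (Set.range (fun i => momentCurve (2*l) (u i))))
      (convexHull ℝ ((fun i => momentCurve (2*l) (u i)) '' ↑S)) := by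
  classical
  set v : Fin (2*l+2) → Euc (2*l) := fun i => momentCurve (2*l) (u i) with hv
  set p : ℝ[X] := ∏ i ∈ S, (X - C (u i))^2 with hp
  have hp0 : p ≠ 0 := by
    apply Finset.prod_ne_zero_iff.mpr
    intro i _
    exact pow_ne_zero 2 (X_sub_C_ne_zero (u i))
  have hpdeg : p.natDegree = 2 * S.card := by
    rw [hp, natDegree_prod _ _ (fun i _ => pow_ne_zero 2 (X_sub_C_ne_zero (u i)))]
    simp [natDegree_pow, natDegree_X_sub_C, mul_comm]
  have hpmonic : p.Monic := monic_prod_of_monic _ _ (fun i _ => (monic_X_sub_C (u i)).pow 2)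
  have hpeval : ∀ s : ℝ, p.eval s = ∏ i ∈ S, (s - u i)^2 := by
    intro s; rw [hp, eval_prod]; simp
  have hpnn : ∀ s : ℝ, 0 ≤ p.eval s := by
    intro s; rw [hpeval]; exact Finset.prod_nonneg (fun i _ => sq_nonneg _)
  have hpS : ∀ i ∈ S, p.eval (u i) = 0 := by
    intro i hi
    rw [hpeval]
    apply Finset.prod_eq_zero hi
    simp
  have hpnS : ∀ j ∉ S, 0 < p.eval (u j) := by
    intro j hj
    rw [hpeval]
    apply Finset.prod_pos
    intro i hi
    have : u j - u i ≠ 0 := sub_ne_zero_of_ne (fun h => hj ((hu h) ▸ hi))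
    positivity
  have hdegle : p.natDegree ≤ 2*l := by omega
  set a : Fin (2*l) → ℝ := fun i => -(p.coeff ((i:ℕ)+1)) with ha
  set L := coeffL a with hL
  set c : ℝ := p.coeff 0 with hc
  have hLv : ∀ i, L (v i) = c - p.eval (u i) := fun i => coeffL_poly p hdegle (u i)
  have hLne : L ≠ 0 := by
    have h1 : 1 ≤ p.natDegree := by
      obtain ⟨i, hi⟩ := hSne
      have : 1 ≤ S.card := Finset.card_pos.mpr ⟨i, hi⟩
      omega
    refine coeffL_ne_zero a ⟨p.natDegree - 1, by omega⟩ ?_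
    simp only [ha]
    have : (p.natDegree - 1) + 1 = p.natDegree := by omega
    rw [this]
    rw [← Polynomial.leadingCoeff]
    rw [hpmonic.leadingCoeff]
    norm_num
  set V : Finset (Euc (2*l)) := Finset.image v Finset.univ with hV
  have hVcoe : (V : Set (Euc (2*l))) = Set.range v := by
    rw [hV]; simp
  have hbound : ∀ y ∈ V, L y ≤ c := by
    intro y hy
    obtain ⟨i, _, rfl⟩ := Finset.mem_image.mp hy
    rw [hLv]
    linarith [hpnn (u i)]
  have hvinj : Function.Injective v := by
    intro i j hij
    apply hu
    have := congrArg (fun x : Euc (2*l) => x ⟨0, by omega⟩) hij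
    simpa [hv, momentCurve] using this
  have hfilterset : (↑(V.filter (fun y => L y = c)) : Set (Euc (2*l))) = v '' ↑S := by
    ext y
    simp only [Finset.coe_filter, Set.mem_setOf_eq, Set.mem_image, Finset.mem_coe]
    constructor
    · rintro ⟨hyV, hLy⟩
      obtain ⟨i, _, rfl⟩ := Finset.mem_image.mp hyV
      refine ⟨i, ?_, rfl⟩
      by_contra hiS
      rw [hLv] at hLy
      have := hpnS i hiS
      linarith
    · rintro ⟨i, hi, rfl⟩
      exact ⟨Finset.mem_image.mpr ⟨i, Finset.mem_univ i, rfl⟩, by rw [hLv, hpS i hi]; ring⟩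
  have hCbound : ∀ x ∈ convexHull ℝ (Set.range v), L x ≤ c := by
    intro x hx
    have : convexHull ℝ (Set.range v) ⊆ {x | L x ≤ c} := by
      apply convexHull_min
      · rw [← hVcoe]; exact fun y hy => hbound y hy
      · exact convex_halfSpace_le (LinearMap.isLinear L) c
    exact this hx
  refine ⟨L, c, hLne, hCbound, ?_, ?_⟩
  · obtain ⟨i, hi⟩ := hSne
    exact ⟨v i, subset_convexHull ℝ _ (Set.mem_range_self i), by rw [hLv, hpS i hi]; ring⟩
  · have h2 := faceEq V L c hbound
    rw [hVcoe, hfilterset] at h2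
    exact h2.symm

open Polynomial in
lemma alt_not_face {l : ℕ} (hl : 1 ≤ l) (u : Fin (2*l+2) → ℝ) (hu : StrictMono u)
    (hverts : verts (convexHull ℝ (Set.range fun i => momentCurve (2*l) (u i)))
      = Set.range fun i => momentCurve (2*l) (u i))
    (S : Set (Fin (2*l+2)))
    (hS : (∀ i, i ∈ S ↔ Odd (i:ℕ)) ∨ (∀ i, i ∈ S ↔ Even (i:ℕ))) :
    ¬ MemBoundary (convexHull ℝ (Set.range fun i => momentCurve (2*l) (u i)))
      (convexHull ℝ ((fun i => momentCurve (2*l) (u i)) '' S)) := by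
  set v : Fin (2*l+2) → Euc (2*l) := fun i => momentCurve (2*l) (u i) with hv
  have hvinj : Function.Injective v := by
    intro i j hij
    apply hu.injective
    have := congrArg (fun x : Euc (2*l) => x ⟨0, by omega⟩) hij
    simpa [hv, momentCurve] using this
  have hSnonempty : ∃ i0, i0 ∈ S := by
    rcases hS with h | h
    · exact ⟨⟨1, by omega⟩, (h _).mpr ⟨0, by simp⟩⟩
    · exact ⟨⟨0, by omega⟩, (h _).mpr ⟨0, by simp⟩⟩
  obtain ⟨i0, hi0⟩ := hSnonempty
  intro hmem
  have hmemC : ∀ i, v i ∈ convexHull ℝ (Set.range v) :=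
    fun i => subset_convexHull ℝ _ (Set.mem_range_self i)
  rcases hmem with hempty | ⟨L, c, hLne, hle, hatt, heq⟩
  · have : v i0 ∈ convexHull ℝ (v '' S) :=
      subset_convexHull ℝ _ (Set.mem_image_of_mem v hi0)
    rw [hempty] at this
    exact this
  · have hLS : ∀ i ∈ S, L (v i) = c := by
      intro i hi
      have : v i ∈ convexHull ℝ (v '' S) := subset_convexHull ℝ _ (Set.mem_image_of_mem v hi)
      rw [heq] at this
      exact this.2
    have hLnS : ∀ i, i ∉ S → L (v i) < c := by
      intro i hiS
      refine lt_of_le_of_ne (hle _ (hmemC i)) (fun hEq => ?_)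
      have hxF : v i ∈ convexHull ℝ (v '' S) := by rw [heq]; exact ⟨hmemC i, hEq⟩
      have hx_ext : v i ∈ (convexHull ℝ (Set.range v)).extremePoints ℝ := by
        have : v i ∈ verts (convexHull ℝ (Set.range v)) := by
          rw [hverts]; exact Set.mem_range_self i
        exact this
      have hrestrict : v i ∈ (convexHull ℝ (v '' S)).extremePoints ℝ := by
        rw [mem_extremePoints] at hx_ext ⊢
        refine ⟨hxF, fun x1 hx1 x2 hx2 hseg => ?_⟩
        exact hx_ext.2 x1 (convexHull_mono (Set.image_subset_range v S) hx1)
          x2 (convexHull_mono (Set.image_subset_range v S) hx2) hseg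
      obtain ⟨j, hjS, hji⟩ := extremePoints_convexHull_subset hrestrict
      exact hiS (hvinj hji ▸ hjS)
    set a : Fin (2*l) → ℝ := fun j => L (EuclideanSpace.single j 1) with ha
    have hLa : L = coeffL a := lin_eq_coeffL L
    set q : ℝ[X] := Polynomial.C c - ∑ j : Fin (2*l), Polynomial.C (a j) * X^((j:ℕ)+1) with hq
    have hqeval : ∀ s : ℝ, q.eval s = c - L (momentCurve (2*l) s) := by
      intro s
      rw [hLa, coeffL_moment, hq]
      simp [eval_finset_sum]
    have hq0 : q ≠ 0 := by
      intro h
      apply hLne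
      have hcoeff : ∀ j : Fin (2*l), q.coeff ((j:ℕ)+1) = -(a j) := by
        intro j
        rw [hq, coeff_sub, coeff_C, if_neg (by omega : ¬((j:ℕ)+1 = 0)), finset_sum_coeff]
        simp only [coeff_C_mul, coeff_X_pow]
        rw [Finset.sum_eq_single j]
        · simp
        · intro b _ hbj
          have : ¬((j:ℕ)+1 = (b:ℕ)+1) := by
            intro hh
            exact hbj (Fin.ext (by omega))
          simp [this, Fin.val_inj, hbj.symm]
        · simp
      have ha0 : ∀ j, a j = 0 := by
        intro j
        have := hcoeff j
        rw [h] at this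
        simp at this
        linarith [this]
      rw [hLa]
      ext x
      rw [coeffL_apply]
      simp [ha0]
    have hqdeg : q.natDegree ≤ 2*l := by
      refine le_trans (natDegree_sub_le _ _) (max_le (by simp) ?_)
      refine natDegree_sum_le_of_forall_le _ _ (fun j _ => ?_)
      refine le_trans (natDegree_C_mul_le _ _) ?_
      rw [natDegree_X_pow]
      omega
    rcases hS with hodd | heven
    · refine no_alt_poly q hq0 hqdeg u hu (fun i hi => ?_) (fun i hi => ?_)
      · have hiS : i ∉ S := fun h => (Nat.not_odd_iff_even.mpr hi) ((hodd i).mp h)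
        have := hLnS i hiS
        rw [hqeval]
        linarith
      · have hiS : i ∈ S := (hodd i).mpr hi
        rw [hqeval, hLS i hiS]
        ring
    · refine no_alt_poly_even q hq0 hqdeg u hu (fun i hi => ?_) (fun i hi => ?_)
      · have hiS : i ∉ S := fun h => (Nat.not_even_iff_odd.mpr hi) ((heven i).mp h)
        have := hLnS i hiS
        rw [hqeval]
        linarith
      · have hiS : i ∈ S := (heven i).mpr hi
        rw [hqeval, hLS i hiS]
        ring

lemma cardOddF (l : ℕ) :
    (Finset.univ.filter (fun i : Fin (2*l+2) => Odd (i:ℕ))).card = l+1 := by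
  classical
  have himg : Finset.univ.filter (fun i : Fin (2*l+2) => Odd (i:ℕ))
      = Finset.image (fun j : Fin (l+1) => (⟨2*(j:ℕ)+1, by omega⟩ : Fin (2*l+2))) Finset.univ := by
    ext i
    simp only [Finset.mem_filter, Finset.mem_univ, true_and, Finset.mem_image]
    constructor
    · rintro ⟨r, hr⟩
      have := i.isLt
      exact ⟨⟨r, by omega⟩, Fin.ext (by simp; omega)⟩
    · rintro ⟨j, rfl⟩
      exact ⟨(j:ℕ), rfl⟩
  rw [himg, Finset.card_image_of_injective _ (fun a b hab => Fin.ext (by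
    have := congrArg Fin.val hab; simp at this; omega))]
  simp

lemma cardEvenF (l : ℕ) :
    (Finset.univ.filter (fun i : Fin (2*l+2) => Even (i:ℕ))).card = l+1 := by
  classical
  have himg : Finset.univ.filter (fun i : Fin (2*l+2) => Even (i:ℕ))
      = Finset.image (fun j : Fin (l+1) => (⟨2*(j:ℕ), by omega⟩ : Fin (2*l+2))) Finset.univ := by
    ext i
    simp only [Finset.mem_filter, Finset.mem_univ, true_and, Finset.mem_image]
    constructor
    · rintro ⟨r, hr⟩
      have := i.isLt
      exact ⟨⟨r, by omega⟩, Fin.ext (by simp; omega)⟩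
    · rintro ⟨j, rfl⟩
      exact ⟨(j:ℕ), by simp only [Fin.val_mk]; omega⟩
  rw [himg, Finset.card_image_of_injective _ (fun a b hab => Fin.ext (by
    have := congrArg Fin.val hab; simp at this; omega))]
  simp


/-- Let `C` be a cyclic `2ℓ`-polytope with `2ℓ+2` vertices, and
`c_1, …, c_{2k-1}` distinct vertices of `C` with `1 ≤ k ≤ ℓ+1`. Then some `k` of them are
contained in a missing face `M ∈ ℳ(C)`. -/
theorem statement_4 {l k : ℕ} (hk1 : 1 ≤ k) (hk : k ≤ l + 1)
    (C : Set (Euc (2 * l))) (hC : IsCyclicPolytope (2 * l) (2 * l + 2) C)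
    (c : Fin (2 * k - 1) → Euc (2 * l)) (hc : Function.Injective c)
    (hcv : ∀ j, c j ∈ verts C) :
    ∃ T M : Set (Euc (2 * l)), T ⊆ Set.range c ∧ T.ncard = k ∧
      IsMissingFace C M ∧ T ⊆ M := by
  classical
  obtain ⟨t, htinj, hCeq, hncard⟩ := hC
  rcases Nat.eq_zero_or_pos l with rfl | hl
  · exfalso
    have hsub : ∀ a b : Euc (2*0), a = b := by
      intro a b; ext i; exact absurd i.isLt (by omega)
    have hfin : (verts C).Finite := Set.finite_of_ncard_ne_zero (by rw [hncard]; omega)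
    obtain ⟨a, b, -, -, hab⟩ := (Set.one_lt_ncard_iff hfin).mp (by rw [hncard]; omega)
    exact hab (hsub a b)
  set u : Fin (2*l+2) → ℝ := t ∘ (Tuple.sort t) with hudef
  have humono : Monotone u := Tuple.monotone_sort t
  have huinj : Function.Injective u := htinj.comp (Tuple.sort t).injective
  have hustrict : StrictMono u := humono.strictMono_of_injective huinj
  set v : Fin (2*l+2) → Euc (2*l) := fun i => momentCurve (2*l) (u i) with hv
  have hvinj : Function.Injective v := by
    intro a b hab
    apply huinj
    have := congrArg (fun x : Euc (2*l) => x ⟨0, by omega⟩) hab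
    simpa [hv, momentCurve] using this
  have hCeq' : C = convexHull ℝ (Set.range v) := by
    rw [hCeq]
    congr 1
    have h1 : v = (fun i => momentCurve (2*l) (t i)) ∘ (Tuple.sort t) := rfl
    rw [h1, Function.Surjective.range_comp (Tuple.sort t).surjective]
  have hsubset : verts C ⊆ Set.range v := by
    rw [hCeq']
    exact extremePoints_convexHull_subset
  have hcard_range : (Set.range v).ncard = 2*l+2 := by
    rw [← Set.image_univ, Set.ncard_image_of_injective _ hvinj, Set.ncard_univ]
    simp
  have hvC : verts C = Set.range v :=
    Set.eq_of_subset_of_ncard_le hsubset (by rw [hcard_range, hncard]) (Set.finite_range v)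
  have hcv' : ∀ j, ∃ idx, v idx = c j := by
    intro j
    have := hcv j
    rw [hvC] at this
    exact this
  choose iF hiF using hcv'
  have hiinj : Function.Injective iF := by
    intro a b hab
    apply hc
    rw [← hiF a, ← hiF b, hab]
  have claim : ∀ S : Set (Fin (2*l+2)),
      ((∀ x, x ∈ S ↔ Odd (x:ℕ)) ∨ (∀ x, x ∈ S ↔ Even (x:ℕ))) →
      IsMissingFace C (v '' S) := by
    intro S hS
    have hvertsempty : verts (∅ : Set (Euc (2*l))) = ∅ := by
      simp [verts]
    have hSFin : (Finset.univ.filter (fun idx : Fin (2*l+2) => idx ∈ S)).card = l + 1 := by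
      rcases hS with h | h
      · rw [show (Finset.univ.filter (fun idx : Fin (2*l+2) => idx ∈ S))
            = Finset.univ.filter (fun i : Fin (2*l+2) => Odd (i:ℕ)) from
            Finset.filter_congr (fun x _ => by simp [h x])]
        exact cardOddF l
      · rw [show (Finset.univ.filter (fun idx : Fin (2*l+2) => idx ∈ S))
            = Finset.univ.filter (fun i : Fin (2*l+2) => Even (i:ℕ)) from
            Finset.filter_congr (fun x _ => by simp [h x])]
        exact cardEvenF l
    refine ⟨?_, ?_, ?_⟩
    · rw [hvertsempty]
      intro x hx
      refine ⟨?_, Set.notMem_empty x⟩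
      rw [hvC]
      exact Set.image_subset_range v S hx
    · rw [Set.union_empty, hCeq']
      exact alt_not_face hl u hustrict (by rw [← hCeq']; exact hvC) S hS
    · intro A' hA'
      rw [Set.union_empty]
      rcases Set.eq_empty_or_nonempty A' with rfl | hA'ne
      · left; exact convexHull_empty
      · right
        set SF : Finset (Fin (2*l+2)) := Finset.univ.filter (fun idx => v idx ∈ A') with hSF
        have himg : v '' ↑SF = A' := by
          ext x
          constructor
          · rintro ⟨idx, hidx, rfl⟩
            exact (Finset.mem_filter.mp (Finset.mem_coe.mp hidx)).2
          · intro hx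
            obtain ⟨idx, hidxS, rfl⟩ := hA'.subset hx
            exact ⟨idx, Finset.mem_coe.mpr (Finset.mem_filter.mpr ⟨Finset.mem_univ _, hx⟩), rfl⟩
        have hsub1 : SF ⊆ Finset.univ.filter (fun idx : Fin (2*l+2) => idx ∈ S) := by
          intro idx hidx
          have hxA : v idx ∈ A' := (Finset.mem_filter.mp hidx).2
          have hxM : v idx ∈ v '' S := hA'.subset hxA
          obtain ⟨j, hjS, hj⟩ := hxM
          have hje : j = idx := hvinj hj
          exact Finset.mem_filter.mpr ⟨Finset.mem_univ _, hje ▸ hjS⟩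
        have hSFss : SF ⊂ Finset.univ.filter (fun idx : Fin (2*l+2) => idx ∈ S) := by
          obtain ⟨x0, hx0M, hx0A⟩ := Set.exists_of_ssubset hA'
          obtain ⟨idx0, hidx0S, rfl⟩ := hx0M
          exact (Finset.ssubset_iff_of_subset hsub1).mpr
            ⟨idx0, Finset.mem_filter.mpr ⟨Finset.mem_univ _, hidx0S⟩,
             fun hmem => hx0A (Finset.mem_filter.mp hmem).2⟩
        have hSFcard : SF.card ≤ l := by
          have := Finset.card_lt_card hSFss
          omega
        have hSFne : SF.Nonempty := by
          obtain ⟨x, hx⟩ := hA'ne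
          rw [← himg] at hx
          obtain ⟨idx, hidx, -⟩ := hx
          exact ⟨idx, Finset.mem_coe.mp hidx⟩
        have hface := face_of_small hl u huinj SF hSFne hSFcard
        rw [hCeq']
        have h2 : (fun i => momentCurve (2*l) (u i)) '' ↑SF = A' := himg
        rw [h2] at hface
        exact hface
  have hcards := Finset.card_filter_add_card_filter_not
      (s := (Finset.univ : Finset (Fin (2*k-1)))) (p := fun j => Odd ((iF j : ℕ)))
  rw [Finset.card_univ, Fintype.card_fin] at hcards
  rcases le_or_gt k (Finset.univ.filter (fun j => Odd ((iF j : ℕ)))).card with hbig | hsmall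
  · obtain ⟨T', hT'sub, hT'card⟩ := Finset.exists_subset_card_eq hbig
    refine ⟨↑(T'.image c), v '' {idx : Fin (2*l+2) | Odd ((idx:ℕ))}, ?_, ?_,
      claim _ (Or.inl (fun x => Iff.rfl)), ?_⟩
    · intro x hx
      obtain ⟨j, -, rfl⟩ := Finset.mem_image.mp (Finset.mem_coe.mp hx)
      exact Set.mem_range_self j
    · rw [Set.ncard_coe_finset, Finset.card_image_of_injective _ hc, hT'card]
    · intro x hx
      obtain ⟨j, hj, rfl⟩ := Finset.mem_image.mp (Finset.mem_coe.mp hx)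
      have hjodd : Odd ((iF j : ℕ)) := (Finset.mem_filter.mp (hT'sub hj)).2
      rw [← hiF j]
      exact Set.mem_image_of_mem v hjodd
  · have hbig2 : k ≤ (Finset.univ.filter (fun j => ¬ Odd ((iF j : ℕ)))).card := by omega
    obtain ⟨T', hT'sub, hT'card⟩ := Finset.exists_subset_card_eq hbig2
    refine ⟨↑(T'.image c), v '' {idx : Fin (2*l+2) | Even ((idx:ℕ))}, ?_, ?_,
      claim _ (Or.inr (fun x => Iff.rfl)), ?_⟩
    · intro x hx
      obtain ⟨j, -, rfl⟩ := Finset.mem_image.mp (Finset.mem_coe.mp hx)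
      exact Set.mem_range_self j
    · rw [Set.ncard_coe_finset, Finset.card_image_of_injective _ hc, hT'card]
    · intro x hx
      obtain ⟨j, hj, rfl⟩ := Finset.mem_image.mp (Finset.mem_coe.mp hx)
      have hjeven : Even ((iF j : ℕ)) :=
        Nat.not_odd_iff_even.mp (Finset.mem_filter.mp (hT'sub hj)).2
      rw [← hiF j]
      exact Set.mem_image_of_mem v hjeven
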